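/- Let Q be a nonempty finite set of points in R^d with centroid μ, C a finite nonempty set of centers, and β ≥ 0. If cost(Q, C) > (β+1) * cost(Q, μ), then for every c ∈ C we have ||c - μ||² > (β/|Q|) * cost(Q, μ). -/

import Mathlib

lemma bias_var (d : ℕ) (Q : Finset (EuclideanSpace ℝ (Fin d))) (hQ : Q.Nonempty)
    (μ c : EuclideanSpace ℝ (Fin d)) (hμ : μ = (Q.card : ℝ)⁻¹ • ∑ q ∈ Q, q) :
    ∑ q ∈ Q, ‖q - c‖ ^ 2 = ∑ q ∈ Q, ‖q - μ‖ ^ 2 + (Q.card : ℝ) * ‖μ - c‖ ^ 2 := by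
  have hsum : ∑ q ∈ Q, (q - μ) = 0 := by
    rw [Finset.sum_sub_distrib, Finset.sum_const, hμ, ← Nat.cast_smul_eq_nsmul ℝ,
      smul_smul, mul_inv_cancel₀ (by exact_mod_cast hQ.card_ne_zero), one_smul, sub_self]
  have key : ∀ q : EuclideanSpace ℝ (Fin d),
      ‖q - c‖ ^ 2 = ‖q - μ‖ ^ 2 + 2 * inner ℝ (q - μ) (μ - c) + ‖μ - c‖ ^ 2 := by
    intro q
    have : q - c = (q - μ) + (μ - c) := by abel
    rw [this, ← real_inner_self_eq_norm_sq, ← real_inner_self_eq_norm_sq,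
      ← real_inner_self_eq_norm_sq, inner_add_add_self, real_inner_comm (μ - c) (q - μ)]
    ring
  calc ∑ q ∈ Q, ‖q - c‖ ^ 2
      = ∑ q ∈ Q, (‖q - μ‖ ^ 2 + 2 * inner ℝ (q - μ) (μ - c) + ‖μ - c‖ ^ 2) := by
        exact Finset.sum_congr rfl fun q _ => key q
    _ = ∑ q ∈ Q, ‖q - μ‖ ^ 2 + 2 * inner ℝ (∑ q ∈ Q, (q - μ)) (μ - c)
          + (Q.card : ℝ) * ‖μ - c‖ ^ 2 := by
        rw [Finset.sum_add_distrib, Finset.sum_add_distrib, sum_inner,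
          Finset.sum_const, nsmul_eq_mul, ← Finset.mul_sum]
    _ = ∑ q ∈ Q, ‖q - μ‖ ^ 2 + (Q.card : ℝ) * ‖μ - c‖ ^ 2 := by
        rw [hsum, inner_zero_left]; ring

theorem stmt_2 (d : ℕ) (Q C : Finset (EuclideanSpace ℝ (Fin d)))
    (hQ : Q.Nonempty) (hC : C.Nonempty) (β : ℝ) (hβ : 0 ≤ β)
    (μ : EuclideanSpace ℝ (Fin d)) (hμ : μ = (Q.card : ℝ)⁻¹ • ∑ q ∈ Q, q)
    (hcost : ∑ q ∈ Q, (C.inf' hC fun c => ‖q - c‖ ^ 2)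
        > (β + 1) * ∑ q ∈ Q, ‖q - μ‖ ^ 2) :
    ∀ c ∈ C, ‖c - μ‖ ^ 2 > (β / (Q.card : ℝ)) * ∑ q ∈ Q, ‖q - μ‖ ^ 2 := by
  intro c hc
  have hle : ∑ q ∈ Q, (C.inf' hC fun c => ‖q - c‖ ^ 2) ≤ ∑ q ∈ Q, ‖q - c‖ ^ 2 :=
    Finset.sum_le_sum fun q _ => Finset.inf'_le _ hc
  have hbv := bias_var d Q hQ μ c hμ
  have hcard : (0 : ℝ) < (Q.card : ℝ) := by exact_mod_cast hQ.card_pos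
  have h1 : (β + 1) * ∑ q ∈ Q, ‖q - μ‖ ^ 2
      < ∑ q ∈ Q, ‖q - μ‖ ^ 2 + (Q.card : ℝ) * ‖μ - c‖ ^ 2 := by
    rw [← hbv]; exact lt_of_lt_of_le hcost hle
  have h2 : β * ∑ q ∈ Q, ‖q - μ‖ ^ 2 < (Q.card : ℝ) * ‖μ - c‖ ^ 2 := by nlinarith
  have hnorm : ‖c - μ‖ ^ 2 = ‖μ - c‖ ^ 2 := by rw [norm_sub_rev]
  rw [hnorm, gt_iff_lt, div_mul_eq_mul_div, div_lt_iff₀ hcard]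
  linarith [h2]
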